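/- Let K = ℚ(√5) and t = 1 + √5 ∈ K. Then the Weierstrass curves C_{25,1}(t,1) and C_{25,3}(t,1) over K have nonzero discriminants, their discriminants satisfy 5¹²·Δ(C_{25,1}(t,1)) = Δ(C_{25,3}(t,1)), their j-invariants are equal, and yet there is no change of variables (x,y) ↦ (u²x + r, u³y + su²x + w) with u ∈ K^×, r, s, w ∈ K transforming C_{25,1}(t,1) into C_{25,3}(t,1); that is, C_{25,1}(t,1) and C_{25,3}(t,1) are not isomorphic over K. -/

import Mathlib

noncomputable section

/-- The polynomial `S2`. -/
def S2 {K : Type*} [Field K] (t : K) : K := t ^ 2 + 4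

/-- The polynomial `S4`. -/
def S4 {K : Type*} [Field K] (t : K) : K := t ^ 10 + 240 * t ^ 9 + 2170 * t ^ 8 + 8880 * t ^ 7 + 34835 * t ^ 6 + 83748 * t ^ 5 + 206210 * t ^ 4 + 313380 * t ^ 3 + 503545 * t ^ 2 + 424740 * t + 375376

/-- The polynomial `S5`. -/
def S5 {K : Type*} [Field K] (t : K) : K := t ^ 4 + 6 * t ^ 3 + 21 * t ^ 2 + 36 * t + 61

/-- The polynomial `S6`. -/
def S6 {K : Type*} [Field K] (t : K) : K := t ^ 10 - 510 * t ^ 9 - 13580 * t ^ 8 - 36870 * t ^ 7 - 190915 * t ^ 6 - 393252 * t ^ 5 - 1068040 * t ^ 4 - 1508370 * t ^ 3 - 2581955 * t ^ 2 - 2087010 * t - 1885124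

/-- The polynomial `S7`. -/
def S7 {K : Type*} [Field K] (t : K) : K := t ^ 10 + 10 * t ^ 8 + 35 * t ^ 6 - 12 * t ^ 5 + 50 * t ^ 4 - 60 * t ^ 3 + 25 * t ^ 2 - 60 * t + 16

/-- The polynomial `S8`. -/
def S8 {K : Type*} [Field K] (t : K) : K := t ^ 4 + 3 * t ^ 2 + 1

/-- The polynomial `S9`. -/
def S9 {K : Type*} [Field K] (t : K) : K := t ^ 10 + 10 * t ^ 8 + 35 * t ^ 6 - 18 * t ^ 5 + 50 * t ^ 4 - 90 * t ^ 3 + 25 * t ^ 2 - 90 * t + 76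

/-- The curve `C_{25,1}(t,d)`. -/
def C251 {K : Type*} [Field K] (t d : K) : WeierstrassCurve K :=
  { a₁ := 0, a₂ := 0, a₃ := 0,
    a₄ := -27 * d ^ 2 * S2 t * S4 t,
    a₆ := -54 * d ^ 3 * S2 t ^ 2 * S5 t * S6 t }

/-- The curve `C_{25,3}(t,d)`. -/
def C253 {K : Type*} [Field K] (t d : K) : WeierstrassCurve K :=
  { a₁ := 0, a₂ := 0, a₃ := 0,
    a₄ := -10546875 * d ^ 2 * S2 t * S7 t,
    a₆ := -13183593750 * d ^ 3 * S2 t ^ 2 * S8 t * S9 t }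

theorem stmt14 {K : Type*} [Field K] [CharZero K] (s : K) (hs : s ^ 2 = 5)
    (hgen : ∀ x : K, ∃ a b : ℚ, x = (a : K) + (b : K) * s) :
    (C251 (1 + s) 1).Δ ≠ 0 ∧ (C253 (1 + s) 1).Δ ≠ 0 ∧
    5 ^ 12 * (C251 (1 + s) 1).Δ = (C253 (1 + s) 1).Δ ∧
    (C251 (1 + s) 1).c₄ ^ 3 / (C251 (1 + s) 1).Δ =
      (C253 (1 + s) 1).c₄ ^ 3 / (C253 (1 + s) 1).Δ ∧
    ¬ ∃ C : WeierstrassCurve.VariableChange K,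
        C • (C251 (1 + s) 1) = C253 (1 + s) 1 := by
  have sq5 : ∀ q : ℚ, q ^ 2 ≠ 5 := by
    intro q hq
    have h5 : Irrational (Real.sqrt 5) := (by norm_num : Nat.Prime 5).irrational_sqrt
    have hq' : ((q : ℝ)) ^ 2 = 5 := by exact_mod_cast hq
    have habs : ((|q| : ℚ) : ℝ) = Real.sqrt 5 := by
      push_cast
      rw [← hq', Real.sqrt_sq_eq_abs]
    exact h5 ⟨|q|, habs⟩
  have key : ∀ a b : ℚ, (a : K) + (b : K) * s = 0 → a = 0 ∧ b = 0 := by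
    intro a b hab
    by_cases hb : b = 0
    · subst hb
      push_cast at hab
      simp only [zero_mul, add_zero] at hab
      exact ⟨by exact_mod_cast hab, rfl⟩
    · exfalso
      have hbK : (b : K) ≠ 0 := by exact_mod_cast hb
      have hsval : s = ((-a / b : ℚ) : K) := by
        push_cast
        field_simp
        linear_combination hab
      apply sq5 (-a / b)
      have h5' : ((-a / b : ℚ) : K) ^ 2 = ((5 : ℚ) : K) := by
        rw [← hsval]; exact_mod_cast hs
      exact_mod_cast h5'
  have e11 : (C251 (1 + s) 1).a₁ = 0 := rfl
  have e12 : (C251 (1 + s) 1).a₂ = 0 := rfl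
  have e13 : (C251 (1 + s) 1).a₃ = 0 := rfl
  have e21 : (C253 (1 + s) 1).a₁ = 0 := rfl
  have e22 : (C253 (1 + s) 1).a₂ = 0 := rfl
  have e23 : (C253 (1 + s) 1).a₃ = 0 := rfl
  have hA1 : (C251 (1 + s) 1).a₄ = ((-34911000000:K) + (-15588450000:K) * s) := by
    show -27 * (1:K) ^ 2 * S2 (1 + s) * S4 (1 + s) = _
    simp only [S2, S4]
    linear_combination ((-6929465625:K) + (-2991127500:K) * s + (-1217143125:K) * s ^ 2 + (-446350500:K) * s ^ 3 + (-142178625:K) * s ^ 4 + (-37632600:K) * s ^ 5 + (-7949475:K) * s ^ 6 + (-1249020:K) * s ^ 7 + (-131895:K) * s ^ 8 + (-6804:K) * s ^ 9 + (-27:K) * s ^ 10) * hs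
  have hB1 : (C251 (1 + s) 1).a₆ = ((3546585000000000:K) + (1586012400000000:K) * s) := by
    show -54 * (1:K) ^ 3 * S2 (1 + s) ^ 2 * S5 (1 + s) * S6 (1 + s) = _
    simp only [S2, S5, S6]
    linear_combination ((708987410156250:K) + (316015956562500:K) * s + (139503536718750:K) * s ^ 2 + (60165691312500:K) * s ^ 3 + (24860043281250:K) * s ^ 4 + (9616427325000:K) * s ^ 5 + (3403118812500:K) * s ^ 6 + (1077949215000:K) * s ^ 7 + (299377012500:K) * s ^ 8 + (71345043000:K) * s ^ 9 + (14231092500:K) * s ^ 10 + (2298342600:K) * s ^ 11 + (286333650:K) * s ^ 12 + (25325460:K) * s ^ 13 + (1351134:K) * s ^ 14 + (26244:K) * s ^ 15 + (-54:K) * s ^ 16) * hs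
  have hA2 : (C253 (1 + s) 1).a₄ = ((-21819375000000:K) + (-9742781250000:K) * s) := by
    show -10546875 * (1:K) ^ 2 * S2 (1 + s) * S7 (1 + s) = _
    simp only [S2, S7]
    linear_combination ((-4363822265625:K) + (-1945898437500:K) * s + (-862470703125:K) * s ^ 2 + (-370195312500:K) * s ^ 3 + (-149712890625:K) * s ^ 4 + (-54421875000:K) * s ^ 5 + (-17138671875:K) * s ^ 6 + (-4429687500:K) * s ^ 7 + (-896484375:K) * s ^ 8 + (-126562500:K) * s ^ 9 + (-10546875:K) * s ^ 10) * hs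
  have hB2 : (C253 (1 + s) 1).a₆ = ((-55415390625000000000:K) + (-24781443750000000000:K) * s) := by
    show -13183593750 * (1:K) ^ 3 * S2 (1 + s) ^ 2 * S8 (1 + s) * S9 (1 + s) = _
    simp only [S2, S8, S9]
    linear_combination ((-11083078454589843750:K) + (-4956256713867187500:K) * s + (-2216285758300781250:K) * s ^ 2 + (-990021155273437500:K) * s ^ 3 + (-440526897949218750:K) * s ^ 4 + (-193762599609375000:K) * s ^ 5 + (-83105604492187500:K) * s ^ 6 + (-34076478515625000:K) * s ^ 7 + (-13055159179687500:K) * s ^ 8 + (-4561470703125000:K) * s ^ 9 + (-1419635742187500:K) * s ^ 10 + (-383958984375000:K) * s ^ 11 + (-87815917968750:K) * s ^ 12 + (-16374023437500:K) * s ^ 13 + (-2359863281250:K) * s ^ 14 + (-237304687500:K) * s ^ 15 + (-13183593750:K) * s ^ 16) * hs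
  have hD1 : (C251 (1 + s) 1).Δ = ((425152800000000000000000:K) + (191318760000000000000000:K) * s) := by
    simp only [WeierstrassCurve.Δ, WeierstrassCurve.b₂, WeierstrassCurve.b₄,
      WeierstrassCurve.b₆, WeierstrassCurve.b₈, e11, e12, e13, hA1, hB1]
    linear_combination ((542138033300873760000000000000000:K) + (242431348332556872000000000000000:K) * s) * hs
  have hD2 : (C253 (1 + s) 1).Δ = ((103797070312500000000000000000000:K) + (46708681640625000000000000000000:K) * s) := by
    simp only [WeierstrassCurve.Δ, WeierstrassCurve.b₂, WeierstrassCurve.b₄,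
      WeierstrassCurve.b₆, WeierstrassCurve.b₈, e21, e22, e23, hA2, hB2]
    linear_combination ((132357918286346132812500000000000000000000:K) + (59187340901503142578125000000000000000000:K) * s) * hs
  have hD1ne : (((425152800000000000000000:K) + (191318760000000000000000:K) * s) : K) ≠ 0 := by
    intro h
    have hk := key (425152800000000000000000 : ℚ) (191318760000000000000000 : ℚ) (by push_cast; linear_combination h)
    norm_num at hk
  have hD2ne : (((103797070312500000000000000000000:K) + (46708681640625000000000000000000:K) * s) : K) ≠ 0 := by
    intro h
    have hk := key (103797070312500000000000000000000 : ℚ) (46708681640625000000000000000000 : ℚ) (by push_cast; linear_combination h)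
    norm_num at hk
  have hc41 : (C251 (1 + s) 1).c₄ = ((1675728000000:K) + (748245600000:K) * s) := by
    simp only [WeierstrassCurve.c₄, WeierstrassCurve.b₂, WeierstrassCurve.b₄, e11, e12, hA1]
    ring
  have hc42 : (C253 (1 + s) 1).c₄ = ((1047330000000000:K) + (467653500000000:K) * s) := by
    simp only [WeierstrassCurve.c₄, WeierstrassCurve.b₂, WeierstrassCurve.b₄, e21, e22, hA2]
    ring
  refine ⟨by rw [hD1]; exact hD1ne, by rw [hD2]; exact hD2ne, by rw [hD1, hD2]; ring, ?_, ?_⟩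
  · rw [hD1, hD2, hc41, hc42, div_eq_div_iff hD1ne hD2ne]
    ring
  · rintro ⟨C, hC⟩
    have hu0 : ((C.u : K)) ≠ 0 := C.u.ne_zero
    have h1 := congrArg WeierstrassCurve.a₁ hC
    have h2 := congrArg WeierstrassCurve.a₂ hC
    have h3 := congrArg WeierstrassCurve.a₃ hC
    have h4 := congrArg WeierstrassCurve.a₄ hC
    have h6 := congrArg WeierstrassCurve.a₆ hC
    simp only [WeierstrassCurve.variableChange_a₁, WeierstrassCurve.variableChange_a₂,
      WeierstrassCurve.variableChange_a₃, WeierstrassCurve.variableChange_a₄,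
      WeierstrassCurve.variableChange_a₆, Units.val_inv_eq_inv_val,
      e11, e12, e13, e21, e22, e23] at h1 h2 h3 h4 h6
    have hsc : C.s = 0 := by
      field_simp at h1
      linear_combination h1 / 2
    have hrc : C.r = 0 := by
      rw [hsc] at h2
      field_simp at h2
      linear_combination h2 / 3
    have htc : C.t = 0 := by
      rw [hrc] at h3
      field_simp at h3
      linear_combination h3 / 2
    rw [hsc, hrc, htc, hA1, hA2] at h4
    rw [hrc, htc, hB1, hB2] at h6
    have h4' : (C.u : K) ^ 4 * ((-21819375000000:K) + (-9742781250000:K) * s) = ((-34911000000:K) + (-15588450000:K) * s) := by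
      field_simp at h4
      linear_combination -h4
    have h6' : (C.u : K) ^ 6 * ((-55415390625000000000:K) + (-24781443750000000000:K) * s) = ((3546585000000000:K) + (1586012400000000:K) * s) := by
      field_simp at h6
      linear_combination -h6
    have hstep : (C.u : K) ^ 2 * (((-34911000000:K) + (-15588450000:K) * s) * ((-55415390625000000000:K) + (-24781443750000000000:K) * s)) = ((-21819375000000:K) + (-9742781250000:K) * s) * ((3546585000000000:K) + (1586012400000000:K) * s) := by
      linear_combination ((-21819375000000:K) + (-9742781250000:K) * s) * h6' - (C.u : K) ^ 2 * ((-55415390625000000000:K) + (-24781443750000000000:K) * s) * h4'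
    have hPval : (((-34911000000:K) + (-15588450000:K) * s) * ((-55415390625000000000:K) + (-24781443750000000000:K) * s) : K) = ((3866128186232812500000000000000:K) + (1728985028744531250000000000000:K) * s) := by
      linear_combination ((386304296824687500000000000000:K)) * hs
    have hPne : (((3866128186232812500000000000000:K) + (1728985028744531250000000000000:K) * s) : K) ≠ 0 := by
      intro h
      have hk := key (3866128186232812500000000000000 : ℚ) (1728985028744531250000000000000 : ℚ) (by push_cast; linear_combination h)
      norm_num at hk
    have hv2 : (C.u : K) ^ 2 = -1 / 25 := by
      apply mul_right_cancel₀ hPne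
      rw [← hPval, hstep, hPval]
      linear_combination ((-15452171872987500000000000000:K)) * hs
    obtain ⟨a, b, hab⟩ := hgen ((C.u : K))
    rw [hab] at hv2
    have hzero : ((a ^ 2 + 5 * b ^ 2 + 1 / 25 : ℚ) : K) + ((2 * a * b : ℚ) : K) * s = 0 := by
      push_cast
      linear_combination hv2 - (b : K) ^ 2 * hs
    have hk := key _ _ hzero
    have h1 := hk.1
    nlinarith [sq_nonneg a, sq_nonneg b, h1]
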